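/- Let n ≥ 2 and let A = {a₁, a₁⁻¹, …, aₙ, aₙ⁻¹} be the alphabet of the free group F(A) on n generators (so |A| = 2n ≥ 4). Let d₁, d₂ ∈ A be letters and let w be a nonempty reduced word over A. Then there exist letters b₁, b₂ ∈ A such that the word d₁ (b₁ w b₂)² d₂ (the concatenation d₁ b₁ w b₂ b₁ w b₂ d₂) is reduced. -/

import Mathlib

/-- A letter of the alphabet `A = {a₁, a₁⁻¹, …, aₙ, aₙ⁻¹}`: a generator index together
with a sign (exponent ±1). -/
abbrev Letter (n : ℕ) := Fin n × Bool

/-- The inverse letter. -/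
def Letter.inv {n : ℕ} (x : Letter n) : Letter n := (x.1, !x.2)

/-- A word is reduced if it is nonempty and no letter is followed by its inverse. -/
def ReducedWord {n : ℕ} (w : List (Letter n)) : Prop :=
  w ≠ [] ∧ w.Chain' fun a b => b ≠ a.inv

lemma exists_avoid (n : ℕ) (hn : 2 ≤ n) (x y z : Letter n) :
    ∃ b : Letter n, b ≠ x ∧ b ≠ y ∧ b ≠ z := by
  by_contra h
  push_neg at h
  have hsub : (Finset.univ : Finset (Letter n)) ⊆ {x, y, z} := by
    intro b _
    by_contra hb
    simp only [Finset.mem_insert, Finset.mem_singleton, not_or] at hb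
    exact hb.2.2 (h b hb.1 hb.2.1)
  have hc := Finset.card_le_card hsub
  have hcard : (Finset.univ : Finset (Letter n)).card = n * 2 := by
    simp [Finset.card_univ]
  have h3 : ({x, y, z} : Finset (Letter n)).card ≤ 3 := by
    apply le_trans (Finset.card_insert_le _ _)
    have h2 := Finset.card_insert_le y ({z} : Finset (Letter n))
    have h1 : ({z} : Finset (Letter n)).card = 1 := Finset.card_singleton z
    omega
  omega

lemma inv_ne_iff {n : ℕ} (a b : Letter n) : a ≠ b.inv ↔ b ≠ a.inv := by
  constructor <;> · rintro h rfl; simp [Letter.inv] at h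

theorem exists_letters_reduced_sandwich
    (n : ℕ) (hn : 2 ≤ n)
    (d₁ d₂ : Letter n) (w : List (Letter n)) (hw : ReducedWord w) :
    ∃ b₁ b₂ : Letter n,
      ReducedWord ([d₁] ++ [b₁] ++ w ++ [b₂] ++ [b₁] ++ w ++ [b₂] ++ [d₂]) := by
  obtain ⟨hne, hch⟩ := hw
  set h := w.head hne with hh
  set l := w.getLast hne with hl
  obtain ⟨b₁, hb1x, hb1y, -⟩ := exists_avoid n hn d₁.inv h.inv d₁
  obtain ⟨b₂, hb2x, hb2y, hb2z⟩ := exists_avoid n hn l.inv b₁.inv d₂.inv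
  refine ⟨b₁, b₂, ?_, ?_⟩
  · simp
  · have hhead : w.head? = some h := List.head?_eq_head hne
    have hlast : w.getLast? = some l := List.getLast?_eq_getLast hne
    simp only [List.Chain', List.isChain_append, List.isChain_singleton, List.head?_cons,
      List.head?_append, hhead, List.getLast?_singleton, List.getLast?_append,
      hlast, Option.mem_def, Option.some.injEq, forall_eq']
    have h1 : h ≠ b₁.inv := (inv_ne_iff _ _).mp hb1y
    have h2 : b₁ ≠ b₂.inv := (inv_ne_iff _ _).mp hb2y
    have h3 : d₂ ≠ b₂.inv := (inv_ne_iff _ _).mp hb2z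
    simp only [Option.or, Option.some.injEq, forall_eq']
    exact ⟨⟨⟨⟨⟨⟨⟨trivial, trivial, hb1x⟩, hch, h1⟩, trivial, hb2x⟩, trivial, h2⟩,
      hch, h1⟩, trivial, hb2x⟩, trivial, h3⟩
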